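/- Serre-duality antisymmetry for the rank-2 residue polynomial: R_>^ν(k;λ,μ) = −R_>^ν(k; −λ+k+1−(ν₁+ν₂), μ) − (−(2k+4))^g · Res_{u=0} [ (e^{u(λ+μ+1)} − e^{u(λ−μ)}) e^{u(ν₁+ν₂)/2} φ̇(u) / ((2sinh(u/2))^{2g}(1 − e^{u(k+2)})) ] du. -/

import Mathlib

open Complex

/-- The rank-2 character `φ(u) = sinh((d+1)u/2)/sinh(u/2)` where `d = ν₁ - ν₂`. -/
noncomputable def phiC (d : ℤ) (u : ℂ) : ℂ :=
  Complex.sinh (((d : ℂ) + 1) * u / 2) / Complex.sinh (u / 2)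

/-- `φ̇ = 2 φ'`. -/
noncomputable def phiDot (d : ℤ) (u : ℂ) : ℂ := 2 * deriv (phiC d) u

/-- `φ̈ = 2 φ̇' = 4 φ''`. -/
noncomputable def phiDDot (d : ℤ) (u : ℂ) : ℂ := 2 * deriv (fun y => phiDot d y) u

/-- `R_>^ν(k;λ,μ)`, defined as `(-1)^g` times the `δ`-derivative at `δ = 0` of the
contour integral `(1/2πi)∮_{|u|=ε} (e^{u(λ+μ+1)} - e^{u(λ-μ)}) e^{u(ν₁+ν₂)/2}
(2k+4+δφ̈(u))^g / ((2 sinh(u/2))^{2g} (1 - e^{u(k+2)+δφ̇(u)})) du`. -/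
noncomputable def Rgt (g k : ℕ) (ν₁ ν₂ : ℤ) (ε : ℝ) (l m : ℤ) : ℂ :=
  (-1 : ℂ) ^ g *
    deriv (fun δ : ℂ =>
      (2 * (Real.pi : ℂ) * Complex.I)⁻¹ *
        ∮ u in C(0, ε),
          (Complex.exp (u * ((l : ℂ) + (m : ℂ) + 1)) - Complex.exp (u * ((l : ℂ) - (m : ℂ)))) *
              Complex.exp (u * ((ν₁ : ℂ) + (ν₂ : ℂ)) / 2) *
              (2 * (k : ℂ) + 4 + δ * phiDDot (ν₁ - ν₂) u) ^ g /
            ((2 * Complex.sinh (u / 2)) ^ (2 * g) *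
              (1 - Complex.exp (u * ((k : ℂ) + 2) + δ * phiDot (ν₁ - ν₂) u)))) 0


section Aux

open Metric Set MeasureTheory

lemma phiC_even (d : ℤ) (u : ℂ) : phiC d (-u) = phiC d u := by
  unfold phiC
  rw [show ((d : ℂ) + 1) * (-u) / 2 = -(((d : ℂ) + 1) * u / 2) by ring,
    show (-u) / 2 = -(u / 2) by ring, Complex.sinh_neg, Complex.sinh_neg, neg_div_neg_eq]

lemma phiDot_odd (d : ℤ) (u : ℂ) : phiDot d (-u) = -phiDot d u := by
  have h : deriv (phiC d) u = -deriv (phiC d) (-u) := by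
    conv_lhs => rw [show phiC d = fun x => phiC d (-x) by funext x; rw [phiC_even]]
    exact deriv_comp_neg (phiC d) u
  unfold phiDot
  rw [show (2 : ℂ) * deriv (phiC d) u = 2 * -deriv (phiC d) (-u) by rw [← h]]
  ring

lemma phiDot_fun_eq (d : ℤ) : (fun y => phiDot d y) = phiDot d := rfl

lemma phiDDot_even (d : ℤ) (u : ℂ) : phiDDot d (-u) = phiDDot d u := by
  have h : deriv (phiDot d) u = deriv (phiDot d) (-u) := by
    conv_lhs => rw [show phiDot d = fun x => -phiDot d (-x) by
      funext x; rw [phiDot_odd, neg_neg]]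
    rw [deriv.fun_neg, deriv_comp_neg (phiDot d) u, neg_neg]
  unfold phiDDot
  rw [phiDot_fun_eq, h]

lemma phiC_analytic (d : ℤ) : AnalyticOnNhd ℂ (phiC d) {u : ℂ | Complex.sinh (u / 2) ≠ 0} := by
  apply AnalyticOnNhd.div
  · intro x _
    exact ((Complex.differentiable_sinh.comp
      ((differentiable_id.const_mul _).div_const 2)).analyticAt x)
  · intro x _
    exact ((Complex.differentiable_sinh.comp (differentiable_id.div_const 2)).analyticAt x)
  · intro x hx; exact hx

lemma phiDot_analytic (d : ℤ) :
    AnalyticOnNhd ℂ (phiDot d) {u : ℂ | Complex.sinh (u / 2) ≠ 0} := by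
  have := (phiC_analytic d).deriv
  exact fun x hx => (analyticAt_const.mul (this x hx))

lemma phiDDot_analytic (d : ℤ) :
    AnalyticOnNhd ℂ (phiDDot d) {u : ℂ | Complex.sinh (u / 2) ≠ 0} := by
  have := (phiDot_analytic d).deriv
  exact fun x hx => (analyticAt_const.mul (this x hx))

/-- Reflection lemma: `∮ f(u) = -∮ f(-u)` on circles centered at `0`. -/
lemma circleIntegral_neg_comp (f : ℂ → ℂ) (ε : ℝ) :
    (∮ u in C(0, ε), f u) = -∮ u in C(0, ε), f (-u) := by
  simp only [circleIntegral, deriv_circleMap, smul_eq_mul]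
  have hmap : ∀ θ : ℝ, -circleMap 0 ε θ = circleMap 0 ε (θ + Real.pi) := by
    intro θ
    simp only [circleMap, zero_add]
    rw [Complex.ofReal_add, add_mul, Complex.exp_add, Complex.exp_pi_mul_I]
    ring
  have h1 : (∫ θ in (0:ℝ)..2 * Real.pi, circleMap 0 ε θ * I * f (-circleMap 0 ε θ))
      = ∫ θ in (0:ℝ)..2 * Real.pi,
          -(circleMap 0 ε (θ + Real.pi) * I * f (circleMap 0 ε (θ + Real.pi))) := by
    apply intervalIntegral.integral_congr
    intro θ _
    simp only
    rw [show f (-circleMap 0 ε θ) = f (circleMap 0 ε (θ + Real.pi)) by rw [hmap θ],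
      show circleMap 0 ε (θ + Real.pi) = -circleMap 0 ε θ from (hmap θ).symm]
    ring
  rw [h1, intervalIntegral.integral_neg, neg_neg]
  have h2 : (∫ θ in (0:ℝ)..2 * Real.pi,
        circleMap 0 ε (θ + Real.pi) * I * f (circleMap 0 ε (θ + Real.pi)))
      = ∫ θ in (0 + Real.pi : ℝ)..(2 * Real.pi + Real.pi),
          circleMap 0 ε θ * I * f (circleMap 0 ε θ) :=
    intervalIntegral.integral_comp_add_right
      (fun θ => circleMap 0 ε θ * I * f (circleMap 0 ε θ)) Real.pi
  rw [h2]
  have hper : Function.Periodic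
      (fun θ : ℝ => circleMap 0 ε θ * I * f (circleMap 0 ε θ)) (2 * Real.pi) := by
    intro θ; simp [periodic_circleMap 0 ε θ]
  have h3 := hper.intervalIntegral_add_eq (0 + Real.pi) 0
  rw [show (2 * Real.pi + Real.pi : ℝ) = 0 + Real.pi + 2 * Real.pi by ring] at *
  rw [h3]
  norm_num

/-- Differentiation under the circle integral, assuming joint continuity of the integrand
and of its `δ`-derivative near `δ = 0`. -/
lemma hasDerivAt_circleIntegral_param {ε r : ℝ} (hε : 0 < ε) (hr : 0 < r)
    (F F' : ℂ → ℂ → ℂ)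
    (hdiff : ∀ δ ∈ ball (0:ℂ) r, ∀ u ∈ sphere (0:ℂ) ε, HasDerivAt (fun x => F x u) (F' δ u) δ)
    (hF : ContinuousOn (fun z : ℂ × ℂ => F z.1 z.2) (closedBall 0 (r/2) ×ˢ sphere 0 ε))
    (hF' : ContinuousOn (fun z : ℂ × ℂ => F' z.1 z.2) (closedBall 0 (r/2) ×ˢ sphere 0 ε)) :
    HasDerivAt (fun δ => ∮ u in C(0, ε), F δ u) (∮ u in C(0, ε), F' 0 u) 0 := by
  have hr2 : (0:ℝ) < r / 2 := by linarith
  have hK : IsCompact (closedBall (0:ℂ) (r/2) ×ˢ sphere (0:ℂ) ε) :=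
    (isCompact_closedBall _ _).prod (isCompact_sphere _ _)
  have hKne : (closedBall (0:ℂ) (r/2) ×ˢ sphere (0:ℂ) ε).Nonempty := by
    refine ⟨(0, (ε : ℂ)), ?_⟩
    constructor
    · exact mem_closedBall_self hr2.le
    · simp [abs_of_pos hε]
  obtain ⟨z₀, hz₀K, hz₀max⟩ := hK.exists_isMaxOn hKne hF'.norm
  set C : ℝ := ‖F' z₀.1 z₀.2‖ with hC
  have hmemF : ∀ x : ℂ, x ∈ closedBall (0:ℂ) (r/2) →
      Continuous fun θ : ℝ => F x (circleMap 0 ε θ) := by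
    intro x hx
    exact hF.comp_continuous (continuous_const.prodMk (continuous_circleMap 0 ε))
      fun θ => ⟨hx, circleMap_mem_sphere _ hε.le _⟩
  have hmemF' : ∀ x : ℂ, x ∈ closedBall (0:ℂ) (r/2) →
      Continuous fun θ : ℝ => F' x (circleMap 0 ε θ) := by
    intro x hx
    exact hF'.comp_continuous (continuous_const.prodMk (continuous_circleMap 0 ε))
      fun θ => ⟨hx, circleMap_mem_sphere _ hε.le _⟩
  have hcm : Continuous fun θ : ℝ => circleMap 0 ε θ * I :=
    (continuous_circleMap 0 ε).mul continuous_const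
  simp only [circleIntegral, deriv_circleMap, smul_eq_mul]
  have main := intervalIntegral.hasDerivAt_integral_of_dominated_loc_of_deriv_le
    (F := fun x θ => circleMap 0 ε θ * I * F x (circleMap 0 ε θ))
    (F' := fun x θ => circleMap 0 ε θ * I * F' x (circleMap 0 ε θ))
    (x₀ := (0:ℂ)) (a := 0) (b := 2 * Real.pi) (μ := MeasureTheory.volume)
    (bound := fun _ => ε * C) (s := ball (0:ℂ) (r/2)) (ball_mem_nhds (0:ℂ) hr2)
    ?_ ?_ ?_ ?_ ?_ ?_
  · exact main.2
  · refine Filter.eventually_of_mem (closedBall_mem_nhds (0:ℂ) hr2) fun x hx => ?_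
    exact (hcm.mul (hmemF x hx)).aestronglyMeasurable
  · exact (hcm.mul (hmemF 0 (mem_closedBall_self hr2.le))).intervalIntegrable _ _
  · exact (hcm.mul (hmemF' 0 (mem_closedBall_self hr2.le))).aestronglyMeasurable
  · apply MeasureTheory.ae_of_all
    intro θ _ x hx
    have hxK : (x, circleMap 0 ε θ) ∈ closedBall (0:ℂ) (r/2) ×ˢ sphere (0:ℂ) ε :=
      ⟨ball_subset_closedBall hx, circleMap_mem_sphere _ hε.le _⟩
    have hb := hz₀max hxK
    calc ‖circleMap 0 ε θ * I * F' x (circleMap 0 ε θ)‖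
        = ε * ‖F' x (circleMap 0 ε θ)‖ := by
          simp [norm_mul, abs_of_pos hε]
      _ ≤ ε * C := mul_le_mul_of_nonneg_left hb hε.le
  · exact intervalIntegrable_const
  · apply MeasureTheory.ae_of_all
    intro θ _ x hx
    have hx' : x ∈ ball (0:ℂ) r := ball_subset_ball (by linarith) hx
    exact ((hdiff x hx' _ (circleMap_mem_sphere _ hε.le _)).const_mul _)

noncomputable def Afun (ν₁ ν₂ l m : ℤ) (u : ℂ) : ℂ :=
  (Complex.exp (u * ((l : ℂ) + (m : ℂ) + 1)) - Complex.exp (u * ((l : ℂ) - (m : ℂ)))) *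
    Complex.exp (u * ((ν₁ : ℂ) + (ν₂ : ℂ)) / 2)

noncomputable def Sfun (g : ℕ) (u : ℂ) : ℂ := (2 * Complex.sinh (u / 2)) ^ (2 * g)

noncomputable def ig (g k : ℕ) (ν₁ ν₂ l m : ℤ) (δ u : ℂ) : ℂ :=
  Afun ν₁ ν₂ l m u * (2 * (k : ℂ) + 4 + δ * phiDDot (ν₁ - ν₂) u) ^ g /
    (Sfun g u * (1 - Complex.exp (u * ((k : ℂ) + 2) + δ * phiDot (ν₁ - ν₂) u)))

noncomputable def ig' (g k : ℕ) (ν₁ ν₂ l m : ℤ) (δ u : ℂ) : ℂ :=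
  (Afun ν₁ ν₂ l m u *
        ((g : ℂ) * (2 * (k : ℂ) + 4 + δ * phiDDot (ν₁ - ν₂) u) ^ (g - 1) *
          (1 * phiDDot (ν₁ - ν₂) u)) *
      (Sfun g u * (1 - Complex.exp (u * ((k : ℂ) + 2) + δ * phiDot (ν₁ - ν₂) u))) -
    Afun ν₁ ν₂ l m u * (2 * (k : ℂ) + 4 + δ * phiDDot (ν₁ - ν₂) u) ^ g *
      (Sfun g u *
        -(Complex.exp (u * ((k : ℂ) + 2) + δ * phiDot (ν₁ - ν₂) u) *
          (1 * phiDot (ν₁ - ν₂) u)))) /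
    (Sfun g u * (1 - Complex.exp (u * ((k : ℂ) + 2) + δ * phiDot (ν₁ - ν₂) u))) ^ 2

lemma ig_hasDerivAt (g k : ℕ) (ν₁ ν₂ l m : ℤ) (δ u : ℂ)
    (hden : Sfun g u * (1 - Complex.exp (u * ((k : ℂ) + 2) + δ * phiDot (ν₁ - ν₂) u)) ≠ 0) :
    HasDerivAt (fun x => ig g k ν₁ ν₂ l m x u) (ig' g k ν₁ ν₂ l m δ u) δ := by
  have h1 : HasDerivAt
      (fun x : ℂ => (2 * (k : ℂ) + 4 + x * phiDDot (ν₁ - ν₂) u) ^ g)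
      ((g : ℂ) * (2 * (k : ℂ) + 4 + δ * phiDDot (ν₁ - ν₂) u) ^ (g - 1) *
        (1 * phiDDot (ν₁ - ν₂) u)) δ :=
    (((hasDerivAt_id δ).mul_const _).const_add _).pow g
  have h2 : HasDerivAt
      (fun x : ℂ => Sfun g u * (1 - Complex.exp (u * ((k : ℂ) + 2) + x * phiDot (ν₁ - ν₂) u)))
      (Sfun g u *
        -(Complex.exp (u * ((k : ℂ) + 2) + δ * phiDot (ν₁ - ν₂) u) *
          (1 * phiDot (ν₁ - ν₂) u))) δ :=
    ((((hasDerivAt_id δ).mul_const _).const_add _).cexp.const_sub 1).const_mul _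
  exact (h1.const_mul (Afun ν₁ ν₂ l m u)).div h2 hden

lemma Afun_reflect (k : ℕ) (ν₁ ν₂ l m : ℤ) (u : ℂ) :
    Afun ν₁ ν₂ (-l + (k : ℤ) + 1 - (ν₁ + ν₂)) m (-u) * Complex.exp (u * ((k : ℂ) + 2)) =
      -Afun ν₁ ν₂ l m u := by
  unfold Afun
  simp only [sub_mul, ← Complex.exp_add, neg_sub]
  congr 1
  · congr 1; push_cast; ring
  · congr 1; push_cast; ring

lemma Sfun_neg (g : ℕ) (u : ℂ) : Sfun g (-u) = Sfun g u := by
  unfold Sfun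
  rw [show (-u) / 2 = -(u / 2) by ring, Complex.sinh_neg,
    show (2 : ℂ) * -Complex.sinh (u / 2) = -(2 * Complex.sinh (u / 2)) by ring,
    Even.neg_pow (even_two_mul g)]

lemma alg_key (A p q S E X Y G : ℂ) (hE0 : E ≠ 0) (hS : S ≠ 0) (h1E : 1 - E ≠ 0) :
    (-A * E⁻¹ * (G * X * q) * (S * (1 - E⁻¹)) - -A * E⁻¹ * Y * (S * -(E⁻¹ * -p))) /
        (S * (1 - E⁻¹)) ^ 2
      = (A * (G * X * q) * (S * (1 - E)) - A * Y * (S * -(E * p))) / (S * (1 - E)) ^ 2 +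
        Y * (A * p / (S * (1 - E))) := by
  have hE1 : E - 1 ≠ 0 := fun h => h1E (by rw [show (1 : ℂ) - E = -(E - 1) by ring, h, neg_zero])
  have hD : (S * (1 - E⁻¹)) ^ 2 = S ^ 2 * (E - 1) ^ 2 / E ^ 2 := by
    field_simp
  have hN : (-A * E⁻¹ * (G * X * q) * (S * (1 - E⁻¹)) - -A * E⁻¹ * Y * (S * -(E⁻¹ * -p)))
      = (-(A * (G * X * q) * S * (E - 1)) + A * Y * S * p) / E ^ 2 := by
    field_simp; ring
  rw [hN, hD, div_div_div_cancel_right₀]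
  · field_simp
    ring
  · exact pow_ne_zero 2 hE0


lemma exp_ne_one_of_small (w : ℂ) (hw0 : w ≠ 0) (hwn : ‖w‖ < 6) : Complex.exp w ≠ 1 := by
  intro h
  rw [Complex.exp_eq_one_iff] at h
  obtain ⟨n, hn⟩ := h
  rcases eq_or_ne n 0 with rfl | hn0
  · simp at hn; exact hw0 hn
  · have h2π : (6 : ℝ) < 2 * Real.pi := by nlinarith [Real.pi_gt_three]
    have hnn : (1 : ℝ) ≤ |(n : ℝ)| := by
      rw [← Int.cast_abs]
      exact_mod_cast Int.one_le_abs hn0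
    have hnw : ‖w‖ = |(n : ℝ)| * (2 * Real.pi) := by
      rw [hn]
      rw [norm_mul]
      congr 1
      · simp
      · rw [norm_mul, norm_mul]
        simp [abs_of_pos Real.pi_pos]
    nlinarith [Real.pi_pos]

lemma sinh_ne_zero_of_small (w : ℂ) (hw0 : w ≠ 0) (hwn : ‖w‖ < 3) : Complex.sinh w ≠ 0 := by
  intro h0
  rw [show Complex.sinh w = (Complex.exp w - Complex.exp (-w)) / 2 from rfl, div_eq_zero_iff] at h0
  have h1 : Complex.exp w = Complex.exp (-w) := by
    rcases h0 with h | h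
    · exact sub_eq_zero.mp h
    · norm_num at h
  have h2 : Complex.exp (w + w) = 1 := by
    rw [Complex.exp_add]
    nth_rewrite 2 [h1]
    rw [Complex.exp_neg, mul_inv_cancel₀ (Complex.exp_ne_zero w)]
  have h3 : w + w ≠ 0 := by
    intro h; exact hw0 (by linear_combination h / 2)
  have h4 : ‖w + w‖ < 6 := by
    calc ‖w + w‖ ≤ ‖w‖ + ‖w‖ := norm_add_le _ _
      _ < 6 := by linarith
  exact exp_ne_one_of_small _ h3 h4 h2

lemma keyptwise (g k : ℕ) (ν₁ ν₂ l m : ℤ) (u : ℂ)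
    (hs : Complex.sinh (u / 2) ≠ 0) (hE : Complex.exp (u * ((k : ℂ) + 2)) ≠ 1) :
    ig' g k ν₁ ν₂ (-l + (k : ℤ) + 1 - (ν₁ + ν₂)) m 0 (-u) =
      ig' g k ν₁ ν₂ l m 0 u + (2 * (k : ℂ) + 4) ^ g *
        (Afun ν₁ ν₂ l m u * phiDot (ν₁ - ν₂) u /
          (Sfun g u * (1 - Complex.exp (u * ((k : ℂ) + 2))))) := by
  have hE0 : Complex.exp (u * ((k : ℂ) + 2)) ≠ 0 := Complex.exp_ne_zero _
  have hA : Afun ν₁ ν₂ (-l + (k : ℤ) + 1 - (ν₁ + ν₂)) m (-u) =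
      -Afun ν₁ ν₂ l m u * (Complex.exp (u * ((k : ℂ) + 2)))⁻¹ := by
    rw [eq_mul_inv_iff_mul_eq₀ hE0]
    exact Afun_reflect k ν₁ ν₂ l m u
  have hSne : Sfun g u ≠ 0 := pow_ne_zero _ (mul_ne_zero two_ne_zero hs)
  have h1E : (1 : ℂ) - Complex.exp (u * ((k : ℂ) + 2)) ≠ 0 := sub_ne_zero.mpr (Ne.symm hE)
  unfold ig'
  simp only [zero_mul, add_zero, one_mul]
  rw [phiDDot_even, phiDot_odd, Sfun_neg, hA,
    show (-u) * ((k : ℂ) + 2) = -(u * ((k : ℂ) + 2)) by ring, Complex.exp_neg]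
  linear_combination alg_key (Afun ν₁ ν₂ l m u) (phiDot (ν₁ - ν₂) u) (phiDDot (ν₁ - ν₂) u)
    (Sfun g u) (Complex.exp (u * ((k : ℂ) + 2))) ((2 * (k : ℂ) + 4) ^ (g - 1))
    ((2 * (k : ℂ) + 4) ^ g) (g : ℂ) hE0 hSne h1E

lemma circleIntegral_add {f h : ℂ → ℂ} {c : ℂ} {R : ℝ}
    (hf : CircleIntegrable f c R) (hh : CircleIntegrable h c R) :
    (∮ z in C(c, R), (f z + h z)) = (∮ z in C(c, R), f z) + ∮ z in C(c, R), h z := by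
  simp only [circleIntegral, smul_add, intervalIntegral.integral_add hf.out hh.out]

end Aux

set_option maxHeartbeats 1000000 in
/-- Serre-duality antisymmetry for the rank-2 residue polynomial:
`R_>^ν(k;λ,μ) = −R_>^ν(k; −λ+k+1−(ν₁+ν₂), μ) − (−(2k+4))^g ·
Res_{u=0}[(e^{u(λ+μ+1)} − e^{u(λ−μ)}) e^{u(ν₁+ν₂)/2} φ̇(u) /
((2sinh(u/2))^{2g}(1 − e^{u(k+2)}))] du`, the residue being extracted by the contour
integral `(1/2πi)∮_{|u|=ε}` for small `ε`. -/
theorem stmt16 (g k : ℕ) (hg : 2 ≤ g) (hk : 0 < k) (ν₁ ν₂ : ℤ) (hν : ν₂ ≤ ν₁) (l m : ℤ) :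
    ∃ ε₀ > (0 : ℝ), ∀ ε : ℝ, 0 < ε → ε < ε₀ →
      Rgt g k ν₁ ν₂ ε l m
        = -Rgt g k ν₁ ν₂ ε (-l + (k : ℤ) + 1 - (ν₁ + ν₂)) m -
            (-(2 * (k : ℂ) + 4)) ^ g *
              ((2 * (Real.pi : ℂ) * Complex.I)⁻¹ *
                ∮ u in C(0, ε),
                  (Complex.exp (u * ((l : ℂ) + (m : ℂ) + 1)) -
                        Complex.exp (u * ((l : ℂ) - (m : ℂ)))) *
                      Complex.exp (u * ((ν₁ : ℂ) + (ν₂ : ℂ)) / 2) * phiDot (ν₁ - ν₂) u /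
                    ((2 * Complex.sinh (u / 2)) ^ (2 * g) *
                      (1 - Complex.exp (u * ((k : ℂ) + 2))))) := by
  refine ⟨1 / ((k : ℝ) + 2), by positivity, fun ε hε hεlt => ?_⟩
  have hk2 : (0 : ℝ) < (k : ℝ) + 2 := by positivity
  have hεk : ε * ((k : ℝ) + 2) < 1 := (lt_div_iff₀ hk2).mp hεlt
  have hε1 : ε < 1 := by nlinarith [Nat.cast_nonneg (α := ℝ) k]
  have hsinh : ∀ u ∈ Metric.sphere (0 : ℂ) ε, Complex.sinh (u / 2) ≠ 0 := by
    intro u hu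
    have hnu : ‖u‖ = ε := mem_sphere_zero_iff_norm.mp hu
    have hu0 : u ≠ 0 := by
      intro h; rw [h, norm_zero] at hnu; exact hε.ne hnu
    apply sinh_ne_zero_of_small
    · exact div_ne_zero hu0 two_ne_zero
    · rw [norm_div, hnu, show ‖(2 : ℂ)‖ = 2 by norm_num]
      linarith
  have hSne : ∀ u ∈ Metric.sphere (0 : ℂ) ε, Sfun g u ≠ 0 :=
    fun u hu => pow_ne_zero _ (mul_ne_zero two_ne_zero (hsinh u hu))
  have hΩ : Metric.sphere (0 : ℂ) ε ⊆ {u : ℂ | Complex.sinh (u / 2) ≠ 0} :=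
    fun u hu => hsinh u hu
  have hpcont : ContinuousOn (phiDot (ν₁ - ν₂)) (Metric.sphere (0 : ℂ) ε) :=
    fun u hu => ((phiDot_analytic (ν₁ - ν₂) u (hΩ hu)).continuousAt).continuousWithinAt
  have hqcont : ContinuousOn (phiDDot (ν₁ - ν₂)) (Metric.sphere (0 : ℂ) ε) :=
    fun u hu => ((phiDDot_analytic (ν₁ - ν₂) u (hΩ hu)).continuousAt).continuousWithinAt
  obtain ⟨u₀, hu₀, hmax⟩ := (isCompact_sphere (0 : ℂ) ε).exists_isMaxOn
    ⟨(ε : ℂ), by simp [mem_sphere_zero_iff_norm, abs_of_pos hε]⟩ hpcont.norm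
  set M : ℝ := ‖phiDot (ν₁ - ν₂) u₀‖ with hM
  have hM0 : 0 ≤ M := norm_nonneg _
  set r : ℝ := min 1 (ε * ((k : ℝ) + 2) / (2 * (M + 1))) with hrdef
  have hr : 0 < r := lt_min one_pos (by positivity)
  have hknorm : ‖((k : ℂ) + 2)‖ = (k : ℝ) + 2 := by
    rw [show ((k : ℂ) + 2) = (((k + 2 : ℕ) : ℂ)) by push_cast; ring]
    rw [Complex.norm_natCast]
    push_cast; ring
  have hEne : ∀ δ : ℂ, ‖δ‖ < r → ∀ u ∈ Metric.sphere (0 : ℂ) ε,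
      1 - Complex.exp (u * ((k : ℂ) + 2) + δ * phiDot (ν₁ - ν₂) u) ≠ 0 := by
    intro δ hδ u hu
    have hnu : ‖u‖ = ε := mem_sphere_zero_iff_norm.mp hu
    have h1 : ‖u * ((k : ℂ) + 2)‖ = ε * ((k : ℝ) + 2) := by rw [norm_mul, hnu, hknorm]
    have hpb : ‖phiDot (ν₁ - ν₂) u‖ ≤ M := hmax hu
    have hrle : r ≤ ε * ((k : ℝ) + 2) / (2 * (M + 1)) := min_le_right _ _
    have h2 : ‖δ * phiDot (ν₁ - ν₂) u‖ < ε * ((k : ℝ) + 2) / 2 := by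
      rw [norm_mul]
      have e1 : ‖δ‖ * ‖phiDot (ν₁ - ν₂) u‖ ≤ ‖δ‖ * (M + 1) := by
        nlinarith [norm_nonneg δ]
      have e2 : ‖δ‖ * (M + 1) < r * (M + 1) := by nlinarith
      have e3 : r * (M + 1) ≤ ε * ((k : ℝ) + 2) / 2 := by
        calc r * (M + 1) ≤ ε * ((k : ℝ) + 2) / (2 * (M + 1)) * (M + 1) :=
              mul_le_mul_of_nonneg_right hrle (by positivity)
          _ = ε * ((k : ℝ) + 2) / 2 := by field_simp
      linarith
    set w := u * ((k : ℂ) + 2) + δ * phiDot (ν₁ - ν₂) u with hw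
    have h3 : ‖u * ((k : ℂ) + 2)‖ ≤ ‖w‖ + ‖δ * phiDot (ν₁ - ν₂) u‖ := by
      calc ‖u * ((k : ℂ) + 2)‖ = ‖w - δ * phiDot (ν₁ - ν₂) u‖ := by rw [hw]; ring_nf
        _ ≤ ‖w‖ + ‖δ * phiDot (ν₁ - ν₂) u‖ := norm_sub_le _ _
    have hlow : 0 < ‖w‖ := by
      rw [h1] at h3
      nlinarith
    have hup : ‖w‖ < 6 := by
      calc ‖w‖ ≤ ‖u * ((k : ℂ) + 2)‖ + ‖δ * phiDot (ν₁ - ν₂) u‖ := norm_add_le _ _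
        _ < 6 := by rw [h1]; nlinarith
    have hw0 : w ≠ 0 := fun h => by rw [h, norm_zero] at hlow; exact lt_irrefl _ hlow
    exact sub_ne_zero.mpr (Ne.symm (exp_ne_one_of_small w hw0 hup))
  set P := Metric.closedBall (0 : ℂ) (r / 2) ×ˢ Metric.sphere (0 : ℂ) ε with hPdef
  have hAc : ∀ l : ℤ, Continuous (Afun ν₁ ν₂ l m) := by
    intro l; unfold Afun; fun_prop
  have hSc : Continuous (Sfun g) := by unfold Sfun; fun_prop
  have hp2 : ContinuousOn (fun z : ℂ × ℂ => phiDot (ν₁ - ν₂) z.2) P :=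
    hpcont.comp continuous_snd.continuousOn fun z hz => hz.2
  have hq2 : ContinuousOn (fun z : ℂ × ℂ => phiDDot (ν₁ - ν₂) z.2) P :=
    hqcont.comp continuous_snd.continuousOn fun z hz => hz.2
  have hE2 : ContinuousOn
      (fun z : ℂ × ℂ => Complex.exp (z.2 * ((k : ℂ) + 2) + z.1 * phiDot (ν₁ - ν₂) z.2)) P :=
    Complex.continuous_exp.comp_continuousOn
      (((continuous_snd.mul continuous_const).continuousOn).add
        (continuous_fst.continuousOn.mul hp2))
  have hden2 : ContinuousOn (fun z : ℂ × ℂ =>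
      Sfun g z.2 * (1 - Complex.exp (z.2 * ((k : ℂ) + 2) + z.1 * phiDot (ν₁ - ν₂) z.2))) P :=
    ((hSc.comp continuous_snd).continuousOn).mul (continuousOn_const.sub hE2)
  have hdenne : ∀ z ∈ P,
      Sfun g z.2 * (1 - Complex.exp (z.2 * ((k : ℂ) + 2) + z.1 * phiDot (ν₁ - ν₂) z.2)) ≠ 0 := by
    intro z hz
    refine mul_ne_zero (hSne _ hz.2) (hEne z.1 ?_ _ hz.2)
    have h := Metric.mem_closedBall.mp hz.1
    rw [dist_zero_right] at h
    linarith
  have hbase2 : ContinuousOn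
      (fun z : ℂ × ℂ => 2 * (k : ℂ) + 4 + z.1 * phiDDot (ν₁ - ν₂) z.2) P :=
    continuousOn_const.add (continuous_fst.continuousOn.mul hq2)
  have hig'2 : ∀ l : ℤ, ContinuousOn (fun z : ℂ × ℂ => ig' g k ν₁ ν₂ l m z.1 z.2) P := by
    intro l
    unfold ig'
    refine ContinuousOn.div ?_ (hden2.pow 2) fun z hz => pow_ne_zero _ (hdenne z hz)
    refine ContinuousOn.sub ?_ ?_
    · exact ((((hAc l).comp continuous_snd).continuousOn).mul
        ((continuousOn_const.mul (hbase2.pow (g - 1))).mul (continuousOn_const.mul hq2))).mul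
          hden2
    · exact ((((hAc l).comp continuous_snd).continuousOn).mul (hbase2.pow g)).mul
        (((hSc.comp continuous_snd).continuousOn).mul
          ((hE2.mul (continuousOn_const.mul hp2)).neg))
  have hmain : ∀ l : ℤ, HasDerivAt (fun δ => ∮ u in C(0, ε), ig g k ν₁ ν₂ l m δ u)
      (∮ u in C(0, ε), ig' g k ν₁ ν₂ l m 0 u) 0 := by
    intro l
    apply hasDerivAt_circleIntegral_param hε hr
    · intro δ hδ u hu
      exact ig_hasDerivAt g k ν₁ ν₂ l m δ u
        (mul_ne_zero (hSne u hu) (hEne δ (mem_ball_zero_iff.mp hδ) u hu))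
    · show ContinuousOn (fun z : ℂ × ℂ => ig g k ν₁ ν₂ l m z.1 z.2) P
      unfold ig
      exact ((((hAc l).comp continuous_snd).continuousOn).mul (hbase2.pow g)).div hden2 hdenne
    · exact hig'2 l
  have hRgt : ∀ l : ℤ, Rgt g k ν₁ ν₂ ε l m =
      (-1 : ℂ) ^ g * ((2 * (Real.pi : ℂ) * Complex.I)⁻¹ *
        ∮ u in C(0, ε), ig' g k ν₁ ν₂ l m 0 u) := by
    intro l
    have h := ((hmain l).const_mul ((2 * (Real.pi : ℂ) * Complex.I)⁻¹)).deriv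
    show (-1 : ℂ) ^ g * deriv (fun δ : ℂ => (2 * (Real.pi : ℂ) * Complex.I)⁻¹ *
        ∮ u in C(0, ε), ig g k ν₁ ν₂ l m δ u) 0 = _
    rw [h]
  have hexp1 : ∀ u ∈ Metric.sphere (0 : ℂ) ε, Complex.exp (u * ((k : ℂ) + 2)) ≠ 1 := by
    intro u hu
    have h := hEne 0 (by simpa using hr) u hu
    simp only [zero_mul, add_zero] at h
    exact Ne.symm (sub_ne_zero.mp h)
  have hig'cont : ∀ l : ℤ, ContinuousOn (fun u => ig' g k ν₁ ν₂ l m 0 u)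
      (Metric.sphere (0 : ℂ) ε) := by
    intro l
    have hE1 : ContinuousOn
        (fun u : ℂ => Complex.exp (u * ((k : ℂ) + 2) + (0 : ℂ) * phiDot (ν₁ - ν₂) u))
        (Metric.sphere (0 : ℂ) ε) :=
      Complex.continuous_exp.comp_continuousOn
        (((continuous_id.mul continuous_const).continuousOn).add
          (continuousOn_const.mul hpcont))
    have hden1 : ContinuousOn (fun u : ℂ =>
        Sfun g u * (1 - Complex.exp (u * ((k : ℂ) + 2) + (0 : ℂ) * phiDot (ν₁ - ν₂) u)))
        (Metric.sphere (0 : ℂ) ε) :=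
      (hSc.continuousOn).mul (continuousOn_const.sub hE1)
    have hdenne1 : ∀ u ∈ Metric.sphere (0 : ℂ) ε,
        Sfun g u * (1 - Complex.exp (u * ((k : ℂ) + 2) + (0 : ℂ) * phiDot (ν₁ - ν₂) u)) ≠ 0 :=
      fun u hu => mul_ne_zero (hSne u hu) (hEne 0 (by simpa using hr) u hu)
    have hbase1 : ContinuousOn
        (fun u : ℂ => 2 * (k : ℂ) + 4 + (0 : ℂ) * phiDDot (ν₁ - ν₂) u)
        (Metric.sphere (0 : ℂ) ε) :=
      continuousOn_const.add (continuousOn_const.mul hqcont)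
    unfold ig'
    refine ContinuousOn.div ?_ (hden1.pow 2) fun u hu => pow_ne_zero _ (hdenne1 u hu)
    refine ContinuousOn.sub ?_ ?_
    · exact (((hAc l).continuousOn).mul
        ((continuousOn_const.mul (hbase1.pow (g - 1))).mul (continuousOn_const.mul hqcont))).mul
          hden1
    · exact (((hAc l).continuousOn).mul (hbase1.pow g)).mul
        ((hSc.continuousOn).mul ((hE1.mul (continuousOn_const.mul hpcont)).neg))
  have hrescont : ContinuousOn (fun u => Afun ν₁ ν₂ l m u * phiDot (ν₁ - ν₂) u /
      (Sfun g u * (1 - Complex.exp (u * ((k : ℂ) + 2))))) (Metric.sphere (0 : ℂ) ε) := by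
    refine (((hAc l).continuousOn).mul hpcont).div
      ((hSc.continuousOn).mul (continuousOn_const.sub
        (Complex.continuous_exp.comp (continuous_id.mul continuous_const)).continuousOn)) ?_
    exact fun u hu => mul_ne_zero (hSne u hu) (sub_ne_zero.mpr (Ne.symm (hexp1 u hu)))
  have hkey : (∮ u in C(0, ε), ig' g k ν₁ ν₂ (-l + (k : ℤ) + 1 - (ν₁ + ν₂)) m 0 u)
      = -((∮ u in C(0, ε), ig' g k ν₁ ν₂ l m 0 u) + (2 * (k : ℂ) + 4) ^ g *
          ∮ u in C(0, ε), Afun ν₁ ν₂ l m u * phiDot (ν₁ - ν₂) u /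
            (Sfun g u * (1 - Complex.exp (u * ((k : ℂ) + 2))))) := by
    rw [circleIntegral_neg_comp
      (fun u => ig' g k ν₁ ν₂ (-l + (k : ℤ) + 1 - (ν₁ + ν₂)) m 0 u) ε]
    congr 1
    rw [circleIntegral.integral_congr hε.le (g := fun u => ig' g k ν₁ ν₂ l m 0 u +
        (2 * (k : ℂ) + 4) ^ g * (Afun ν₁ ν₂ l m u * phiDot (ν₁ - ν₂) u /
          (Sfun g u * (1 - Complex.exp (u * ((k : ℂ) + 2))))))
      (fun u hu => keyptwise g k ν₁ ν₂ l m u (hsinh u hu) (hexp1 u hu))]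
    rw [circleIntegral_add ((hig'cont l).circleIntegrable hε.le)
        ((show ContinuousOn (fun u => (2 * (k : ℂ) + 4) ^ g * (Afun ν₁ ν₂ l m u * phiDot (ν₁ - ν₂) u /
          (Sfun g u * (1 - Complex.exp (u * ((k : ℂ) + 2)))))) (Metric.sphere (0 : ℂ) ε) from
          continuousOn_const.mul hrescont).circleIntegrable hε.le),
      circleIntegral.integral_const_mul]
  show Rgt g k ν₁ ν₂ ε l m
      = -Rgt g k ν₁ ν₂ ε (-l + (k : ℤ) + 1 - (ν₁ + ν₂)) m -
          (-(2 * (k : ℂ) + 4)) ^ g *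
            ((2 * (Real.pi : ℂ) * Complex.I)⁻¹ *
              ∮ u in C(0, ε), Afun ν₁ ν₂ l m u * phiDot (ν₁ - ν₂) u /
                (Sfun g u * (1 - Complex.exp (u * ((k : ℂ) + 2)))))
  rw [hRgt l, hRgt (-l + (k : ℤ) + 1 - (ν₁ + ν₂)), hkey,
    show (-(2 * (k : ℂ) + 4)) ^ g = (-1) ^ g * (2 * (k : ℂ) + 4) ^ g from by
      rw [← neg_one_mul, mul_pow]]
  ring
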